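/- Let m and d be positive integers and let G be a finite cyclic group. Then D(G × ⟦−m, m⟧^d) ≥ D(G) · (2m − 1 + δ_m)^d, where δ_m = 1 if m = 1 and δ_m = 0 otherwise, and G × ⟦−m, m⟧^d is regarded as a subset of the abelian group G × ℤ^d. -/

import Mathlib

/-- A minimal zero-sum sequence over `X`: a non-empty multiset of elements of `X`
whose sum is `0` and such that no non-empty proper sub-multiset has sum `0`. -/
def IsMinZeroSumSeq {G : Type*} [AddCommGroup G] (X : Set G) (s : Multiset G) : Prop :=
  s ≠ 0 ∧ (∀ x ∈ s, x ∈ X) ∧ s.sum = 0 ∧ ∀ t < s, t ≠ 0 → t.sum ≠ 0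

/-- The Davenport constant of a subset `X` of an abelian group: the supremum of the
lengths of minimal zero-sum sequences over `X` (0 if there are none). -/
noncomputable def davenport {G : Type*} [AddCommGroup G] (X : Set G) : ℕ∞ :=
  ⨆ (s : Multiset G) (_ : IsMinZeroSumSeq X s), (Multiset.card s : ℕ∞)

namespace DavenportAux

open Finset

lemma sum_multiset_finsum {ι M : Type*} [AddCommMonoid M] (s : Finset ι) (f : ι → Multiset M) :
    (∑ i ∈ s, f i).sum = ∑ i ∈ s, (f i).sum := by
  classical
  induction s using Finset.induction_on with
  | empty => simp
  | insert _ _ ha ih => rw [Finset.sum_insert ha, Multiset.sum_add, ih, Finset.sum_insert ha]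

lemma card_multiset_finsum {ι M : Type*} (s : Finset ι) (f : ι → Multiset M) :
    Multiset.card (∑ i ∈ s, f i) = ∑ i ∈ s, Multiset.card (f i) := by
  classical
  induction s using Finset.induction_on with
  | empty => simp
  | insert _ _ ha ih => rw [Finset.sum_insert ha, Multiset.card_add, ih, Finset.sum_insert ha]

/-- Pigeonhole: a minimal zero-sum sequence over a finite abelian group has length
at most the cardinality of the group. -/
lemma card_le_of_min {G : Type*} [AddCommGroup G] [Fintype G]
    (s : Multiset G) (hs : IsMinZeroSumSeq (Set.univ : Set G) s) :
    Multiset.card s ≤ Fintype.card G := by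
  obtain ⟨hne, -, hsum, hmin⟩ := hs
  set l := s.toList with hldef
  have hls : (l : Multiset G) = s := s.coe_toList
  have hlen : l.length = Multiset.card s := s.length_toList
  have key : ∀ i j : ℕ, i < j → j < l.length →
      (l.take (i+1)).sum ≠ (l.take (j+1)).sum := by
    intro i j hij hjl heq
    set t := (l.drop (i+1)).take (j - i) with htdef
    have htake : l.take (j+1) = l.take (i+1) ++ t := by
      rw [htdef, ← List.take_add]
      congr 1
      omega
    have hts : t.sum = 0 := by
      have h2 := congrArg List.sum htake
      rw [List.sum_append, ← heq] at h2
      exact (left_eq_add.mp h2)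
    have htle : (t : Multiset G) ≤ s := by
      rw [← hls]
      exact Multiset.coe_le.mpr (((l.drop (i+1)).take_sublist _).trans (l.drop_sublist _)).subperm
    have htlen : t.length < l.length := by
      rw [htdef, List.length_take, List.length_drop]
      omega
    have htlt : (t : Multiset G) < s := by
      refine lt_of_le_of_ne htle ?_
      intro hcontra
      have : Multiset.card (t : Multiset G) = Multiset.card s := by rw [hcontra]
      rw [Multiset.coe_card] at this
      omega
    have htne : (t : Multiset G) ≠ 0 := by
      rw [Ne, Multiset.coe_eq_zero, ← List.length_eq_zero_iff]
      rw [htdef, List.length_take, List.length_drop]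
      omega
    exact hmin _ htlt htne (by simpa using hts)
  have hinj : Function.Injective (fun i : Fin l.length => (l.take ((i : ℕ)+1)).sum) := by
    intro i j hij
    rcases lt_trichotomy (i : ℕ) (j : ℕ) with h | h | h
    · exact absurd hij (key _ _ h j.isLt)
    · exact Fin.ext h
    · exact absurd hij.symm (key _ _ h i.isLt)
  have := Fintype.card_le_of_injective _ hinj
  rw [Fintype.card_fin] at this
  omega

/-- The core construction lemma.  Given suitable data (a vector `u` of φ-value `a`,
vectors `w j` of φ-value `-b`, with `a, b` coprime, multiplicities summing correctly
and total vector sum zero), the associated multiset is a minimal zero-sum sequence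
over `G × box` of length `card G * (a + b)`. -/
lemma core {G : Type*} [AddCommGroup G] [Fintype G]
    (g : G) (hg : addOrderOf g = Fintype.card G)
    {d mb : ℕ} (a b : ℕ) (hb : 0 < b) (hab : Nat.Coprime b a)
    (u : Fin d → ℤ) (w : ℕ → Fin d → ℤ) (c : ℕ → ℕ) (k : ℤ)
    (hubox : ∀ i, u i ∈ Set.Icc (-(mb : ℤ)) mb)
    (hwbox : ∀ j ∈ Finset.range d, ∀ i, w j i ∈ Set.Icc (-(mb : ℤ)) mb)
    (huw : ∀ j ∈ Finset.range d, u ≠ w j)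
    (hwinj : ∀ j ∈ Finset.range d, ∀ j' ∈ Finset.range d, w j = w j' → j = j')
    (hphiu : ∑ i : Fin d, k ^ (i : ℕ) * u i = (a : ℤ))
    (hphiw : ∀ j ∈ Finset.range d, ∑ i : Fin d, k ^ (i : ℕ) * w j i = -(b : ℤ))
    (hcsum : ∑ j ∈ Finset.range d, c j = Fintype.card G * a)
    (hvec : ∀ i : Fin d,
      ((Fintype.card G * b : ℕ) : ℤ) * u i + ∑ j ∈ Finset.range d, (c j : ℤ) * w j i = 0) :
    ∃ s : Multiset (G × (Fin d → ℤ)),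
      IsMinZeroSumSeq {p : G × (Fin d → ℤ) | ∀ i, p.2 i ∈ Set.Icc (-(mb : ℤ)) mb} s ∧
      Multiset.card s = Fintype.card G * (a + b) := by
  classical
  set n := Fintype.card G with hndef
  have hn : 0 < n := Fintype.card_pos
  -- Bézout coefficients
  set s0 : ℤ := Nat.gcdA b a with hs0
  set t0 : ℤ := Nat.gcdB b a with ht0
  have hbez : (b : ℤ) * s0 + (a : ℤ) * t0 = 1 := by
    have h := Nat.gcd_eq_gcd_ab b a
    rw [hab.gcd_eq_one] at h
    rw [hs0, ht0]
    exact_mod_cast h.symm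
  set α : G := s0 • g with hα
  set β : G := t0 • g with hβ
  set P : G × (Fin d → ℤ) := (α, u) with hP
  set Q : ℕ → G × (Fin d → ℤ) := fun j => (β, w j) with hQ
  set S : Multiset (G × (Fin d → ℤ)) :=
    Multiset.replicate (n * b) P + ∑ j ∈ Finset.range d, Multiset.replicate (c j) (Q j) with hSdef
  have hPQ : ∀ j ∈ Finset.range d, P ≠ Q j := by
    intro j hj h
    exact huw j hj (congrArg Prod.snd h)
  have hQQ : ∀ j ∈ Finset.range d, ∀ j' ∈ Finset.range d, j ≠ j' → Q j ≠ Q j' := by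
    intro j hj j' hj' hne h
    exact hne (hwinj j hj j' hj' (congrArg Prod.snd h))
  -- counts in S
  have hcountP : S.count P = n * b := by
    rw [hSdef, Multiset.count_add, Multiset.count_replicate_self, Multiset.count_sum']
    rw [Finset.sum_eq_zero, add_zero]
    intro j hj
    rw [Multiset.count_replicate, if_neg (Ne.symm (hPQ j hj))]
  have hcountQ : ∀ j ∈ Finset.range d, S.count (Q j) = c j := by
    intro j hj
    rw [hSdef, Multiset.count_add, Multiset.count_replicate,
      if_neg (hPQ j hj), Multiset.count_sum']
    rw [Finset.sum_eq_single j]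
    · rw [Multiset.count_replicate_self, zero_add]
    · intro j' hj' hne
      rw [Multiset.count_replicate, if_neg (hQQ j' hj' j hj hne)]
    · intro h
      exact absurd hj h
  -- sum formula for decomposed multisets
  have hsum_eq : ∀ (x : ℕ) (y : ℕ → ℕ),
      (Multiset.replicate x P + ∑ j ∈ Finset.range d, Multiset.replicate (y j) (Q j)).sum
        = x • P + ∑ j ∈ Finset.range d, (y j) • Q j := by
    intro x y
    rw [Multiset.sum_add, Multiset.sum_replicate, sum_multiset_finsum]
    congr 1
    exact Finset.sum_congr rfl (fun j _ => Multiset.sum_replicate _ _)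
  -- φ as an AddMonoidHom on the vector part
  set φ : (Fin d → ℤ) →+ ℤ :=
    { toFun := fun v => ∑ i : Fin d, k ^ (i : ℕ) * v i
      map_zero' := by simp
      map_add' := by
        intro v₁ v₂
        simp [mul_add, Finset.sum_add_distrib] } with hφdef
  set fH : (G × (Fin d → ℤ)) →+ G := AddMonoidHom.fst _ _ with hfH
  set fZ : (G × (Fin d → ℤ)) →+ ℤ := φ.comp (AddMonoidHom.snd _ _) with hfZ
  have hfZP : fZ P = (a : ℤ) := hphiu
  have hfZQ : ∀ j ∈ Finset.range d, fZ (Q j) = -(b : ℤ) := fun j hj => hphiw j hj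
  -- the group-coordinate computation
  have hαβ : ∀ cc : ℕ, (cc * b) • α + (cc * a) • β = cc • g := by
    intro cc
    have hcast : ((cc * b : ℕ) : ℤ) * s0 + ((cc * a : ℕ) : ℤ) * t0 = (cc : ℤ) := by
      push_cast
      linear_combination (cc : ℤ) * hbez
    calc (cc * b) • α + (cc * a) • β
        = (((cc * b : ℕ) : ℤ) * s0) • g + (((cc * a : ℕ) : ℤ) * t0) • g := by
          rw [hα, hβ, ← natCast_zsmul, ← natCast_zsmul, smul_smul, smul_smul]
      _ = (((cc * b : ℕ) : ℤ) * s0 + ((cc * a : ℕ) : ℤ) * t0) • g := by rw [add_smul]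
      _ = ((cc : ℤ)) • g := by rw [hcast]
      _ = cc • g := natCast_zsmul g cc
  have hng : n • g = 0 := by rw [← hg]; exact addOrderOf_nsmul_eq_zero g
  -- S sums to zero
  have hS0 : S.sum = 0 := by
    rw [hSdef, hsum_eq]
    set E := (n * b) • P + ∑ j ∈ Finset.range d, (c j) • Q j with hE
    have h1 : E.1 = 0 := by
      have : fH E = 0 := by
        rw [hE]
        simp only [map_add, map_nsmul, map_sum]
        have hfHP : fH P = α := rfl
        have hfHQ : ∀ j, fH (Q j) = β := fun j => rfl
        simp only [hfHP, hfHQ]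
        rw [← Finset.sum_smul, hcsum, hαβ n]
        exact hng
      exact this
    have h2 : E.2 = 0 := by
      funext i
      have : ((Pi.evalAddMonoidHom (fun _ : Fin d => ℤ) i).comp
          (AddMonoidHom.snd G (Fin d → ℤ))) E = 0 := by
        rw [hE]
        simp only [map_add, map_nsmul, map_sum]
        have hp : ∀ (z : G × (Fin d → ℤ)), ((Pi.evalAddMonoidHom (fun _ : Fin d => ℤ) i).comp
            (AddMonoidHom.snd G (Fin d → ℤ))) z = z.2 i := fun z => rfl
        simp only [hp, smul_eq_mul, nsmul_eq_mul]
        exact hvec i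
      exact this
    rw [Prod.ext_iff]
    exact ⟨h1, h2⟩
  -- membership
  have hmem : ∀ x ∈ S, x ∈ {p : G × (Fin d → ℤ) | ∀ i, p.2 i ∈ Set.Icc (-(mb : ℤ)) mb} := by
    intro x hx
    rw [hSdef, Multiset.mem_add] at hx
    rcases hx with hx | hx
    · rw [Multiset.eq_of_mem_replicate hx]
      exact hubox
    · rw [Multiset.mem_sum] at hx
      obtain ⟨j, hj, hx⟩ := hx
      rw [Multiset.eq_of_mem_replicate hx]
      exact hwbox j hj
  -- cardinality
  have hcard : Multiset.card S = n * (a + b) := by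
    rw [hSdef, Multiset.card_add, Multiset.card_replicate, card_multiset_finsum]
    simp only [Multiset.card_replicate]
    rw [hcsum]
    ring
  -- nonemptiness
  have hSne : S ≠ 0 := by
    intro h
    have := hcard
    rw [h] at this
    simp at this
    rcases this with h' | h'
    · omega
    · omega
  refine ⟨S, ⟨hSne, hmem, hS0, ?_⟩, hcard⟩
  -- minimality
  intro t hlt hne h0
  have hle := le_of_lt hlt
  set x := t.count P with hx
  set y : ℕ → ℕ := fun j => t.count (Q j) with hy
  have hdecomp : t = Multiset.replicate x P + ∑ j ∈ Finset.range d, Multiset.replicate (y j) (Q j) := by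
    ext e
    rw [Multiset.count_add, Multiset.count_replicate, Multiset.count_sum']
    by_cases heP : e = P
    · subst heP
      rw [if_pos rfl, Finset.sum_eq_zero, add_zero]
      intro j hj
      rw [Multiset.count_replicate, if_neg (Ne.symm (hPQ j hj))]
    · rw [if_neg (fun h => heP h.symm), zero_add]
      by_cases heQ : ∃ j ∈ Finset.range d, e = Q j
      · obtain ⟨j₀, hj₀, rfl⟩ := heQ
        rw [Finset.sum_eq_single j₀]
        · rw [Multiset.count_replicate_self]
        · intro j' hj' hne'
          rw [Multiset.count_replicate, if_neg (hQQ j' hj' j₀ hj₀ hne')]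
        · intro h
          exact absurd hj₀ h
      · push_neg at heQ
        have hc0 : t.count e = 0 := by
          have h1 : S.count e = 0 := by
            rw [hSdef, Multiset.count_add, Multiset.count_replicate,
              if_neg (fun h => heP h.symm),
              Multiset.count_sum', Finset.sum_eq_zero, add_zero]
            intro j hj
            rw [Multiset.count_replicate, if_neg (fun h => heQ j hj h.symm)]
          have := Multiset.count_le_of_le e hle
          omega
        rw [hc0]
        symm
        exact Finset.sum_eq_zero fun j hj => by
          rw [Multiset.count_replicate, if_neg (fun h => heQ j hj h.symm)]
  set Y := ∑ j ∈ Finset.range d, y j with hY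
  have ht_sum : x • P + ∑ j ∈ Finset.range d, (y j) • Q j = 0 := by
    rw [← hsum_eq, ← hdecomp]
    exact h0
  -- the φ-equation
  have hZeq : (x : ℤ) * a = (Y : ℤ) * b := by
    have h1 : fZ (x • P + ∑ j ∈ Finset.range d, (y j) • Q j) = 0 := by rw [ht_sum, map_zero]
    simp only [map_add, map_nsmul, map_sum] at h1
    rw [hfZP] at h1
    rw [Finset.sum_congr rfl (fun j hj => by rw [hfZQ j hj])] at h1
    simp only [smul_eq_mul, nsmul_eq_mul, mul_neg] at h1
    rw [Finset.sum_neg_distrib, ← Finset.sum_mul] at h1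
    have hcast : (∑ j ∈ Finset.range d, ((y j : ℕ) : ℤ)) = ((Y : ℕ) : ℤ) := by
      rw [hY]; push_cast; rfl
    rw [hcast] at h1
    linarith
  have hZn : x * a = Y * b := by exact_mod_cast hZeq
  have hbx : b ∣ x := by
    refine hab.dvd_of_dvd_mul_right ⟨Y, ?_⟩
    rw [hZn]; ring
  obtain ⟨cc, hcc⟩ := hbx
  have hYa : Y = cc * a := by
    have h1 : b * (cc * a) = b * Y := by
      calc b * (cc * a) = (b * cc) * a := by ring
        _ = x * a := by rw [hcc]
        _ = Y * b := hZn
        _ = b * Y := by ring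
    exact (Nat.eq_of_mul_eq_mul_left hb h1).symm
  -- the group equation
  have hGeq : cc • g = 0 := by
    have h1 : fH (x • P + ∑ j ∈ Finset.range d, (y j) • Q j) = 0 := by rw [ht_sum, map_zero]
    simp only [map_add, map_nsmul, map_sum] at h1
    have hfHP : fH P = α := rfl
    have hfHQ : ∀ j, fH (Q j) = β := fun j => rfl
    simp only [hfHP, hfHQ] at h1
    rw [← Finset.sum_smul, ← hY, hYa, hcc, mul_comm b cc, hαβ cc] at h1
    exact h1
  have hndvd : n ∣ cc := hg ▸ addOrderOf_dvd_of_nsmul_eq_zero hGeq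
  have hxle : x ≤ n * b := hcountP ▸ Multiset.count_le_of_le P hle
  have hccle : cc ≤ n := by
    by_contra hcon
    push_neg at hcon
    have : n * b < b * cc := by
      calc n * b = b * n := by ring
        _ < b * cc := by exact (Nat.mul_lt_mul_left hb).mpr hcon
    omega
  rcases Nat.eq_zero_or_pos cc with hcz | hcp
  · -- cc = 0 : t = 0, contradiction
    apply hne
    have hx0 : x = 0 := by rw [hcc, hcz, mul_zero]
    have hY0 : Y = 0 := by rw [hYa, hcz, zero_mul]
    have hyj : ∀ j ∈ Finset.range d, y j = 0 := by
      rw [hY] at hY0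
      intro j hj
      exact (Finset.sum_eq_zero_iff.mp hY0) j hj
    rw [hdecomp, hx0]
    rw [Finset.sum_congr rfl (fun j hj => by rw [hyj j hj])]
    simp
  · -- cc = n : t = S, contradiction
    have hccn : cc = n := le_antisymm hccle (Nat.le_of_dvd hcp hndvd)
    have hxv : x = n * b := by rw [hcc, hccn, mul_comm]
    have hYv : Y = n * a := by rw [hYa, hccn, mul_comm]
    have hyle : ∀ j ∈ Finset.range d, y j ≤ c j := by
      intro j hj
      rw [← hcountQ j hj]
      exact Multiset.count_le_of_le _ hle
    have hysum : ∑ j ∈ Finset.range d, y j = ∑ j ∈ Finset.range d, c j := by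
      rw [← hY, hYv, hcsum]
    have hyc : ∀ j ∈ Finset.range d, y j = c j := by
      intro j hj
      exact (Finset.sum_eq_sum_iff_of_le hyle).mp hysum j hj
    have : t = S := by
      rw [hdecomp, hxv, hSdef]
      congr 1
      exact Finset.sum_congr rfl (fun j hj => by rw [hyc j hj])
    exact absurd this (ne_of_lt hlt)


lemma geomA (q : ℕ) (d : ℕ) : 2*q*(∑ t ∈ Finset.range d, (2*q+1)^t) + 1 = (2*q+1)^d := by
  induction d with
  | zero => simp
  | succ d ih =>
    rw [Finset.sum_range_succ, pow_succ]
    calc 2*q*((∑ t ∈ Finset.range d, (2*q+1)^t) + (2*q+1)^d) + 1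
        = (2*q*(∑ t ∈ Finset.range d, (2*q+1)^t) + 1) + 2*q*(2*q+1)^d := by ring
      _ = (2*q+1)^d + 2*q*(2*q+1)^d := by rw [ih]
      _ = (2*q+1)^d * (2*q+1) := by ring

lemma pow2A (d : ℕ) : (∑ t ∈ Finset.range d, 2^t) + 1 = 2^d := by
  induction d with
  | zero => simp
  | succ d ih =>
    rw [Finset.sum_range_succ, pow_succ]
    omega

lemma colsum_split (F : ℕ → ℤ) (d r : ℕ) (hr : r < d) :
    ∑ t ∈ Finset.range d, F t
      = ∑ t ∈ Finset.range r, F t + (F r + ∑ t ∈ Finset.Ico (r+1) d, F t) := by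
  rw [← Finset.sum_eq_sum_Ico_succ_bot hr F]
  rw [Finset.range_eq_Ico, Finset.range_eq_Ico, Finset.sum_Ico_consecutive F (Nat.zero_le r) (le_of_lt hr)]

lemma colsumA (q : ℕ) (d r : ℕ) (hr : r < d) :
    ∑ t ∈ Finset.range d, (2*(q:ℤ)+1)^t *
      (if t < r then (q:ℤ) else if t = r then -((q:ℤ)+1) else -(q:ℤ))
    = -((q:ℤ) * (∑ t ∈ Finset.range d, (2*(q:ℤ)+1)^t) + 1) := by
  have hsplit := colsum_split (fun t => (2*(q:ℤ)+1)^t *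
      (if t < r then (q:ℤ) else if t = r then -((q:ℤ)+1) else -(q:ℤ))) d r hr
  rw [hsplit]
  beta_reduce
  have h1 : ∑ t ∈ Finset.range r, (2*(q:ℤ)+1)^t *
      (if t < r then (q:ℤ) else if t = r then -((q:ℤ)+1) else -(q:ℤ))
      = (∑ t ∈ Finset.range r, (2*(q:ℤ)+1)^t) * (q:ℤ) := by
    rw [Finset.sum_mul]
    refine Finset.sum_congr rfl fun t ht => ?_
    rw [if_pos (Finset.mem_range.mp ht)]
  have h2 : (2*(q:ℤ)+1)^r *
      (if r < r then (q:ℤ) else if r = r then -((q:ℤ)+1) else -(q:ℤ))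
      = (2*(q:ℤ)+1)^r * (-((q:ℤ)+1)) := by
    rw [if_neg (lt_irrefl r), if_pos rfl]
  have h3 : ∑ t ∈ Finset.Ico (r+1) d, (2*(q:ℤ)+1)^t *
      (if t < r then (q:ℤ) else if t = r then -((q:ℤ)+1) else -(q:ℤ))
      = -((∑ t ∈ Finset.range d, (2*(q:ℤ)+1)^t
          - ∑ t ∈ Finset.range (r+1), (2*(q:ℤ)+1)^t) * (q:ℤ)) := by
    rw [← Finset.sum_Ico_eq_sub _ (by omega : r + 1 ≤ d), Finset.sum_mul,
      ← Finset.sum_neg_distrib]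
    refine Finset.sum_congr rfl fun t ht => ?_
    obtain ⟨ht1, ht2⟩ := Finset.mem_Ico.mp ht
    rw [if_neg (by omega), if_neg (by omega)]
    ring
  rw [h1, h2, h3, Finset.sum_range_succ]
  linear_combination geom_sum_mul (2*(q:ℤ)+1) r

lemma colsumB (d r : ℕ) (hr : r < d) :
    ∑ t ∈ Finset.range d, (2:ℤ)^t *
      (if t < r then (1:ℤ) else if t = r then -1 else 0)
    = -1 := by
  have hsplit := colsum_split (fun t => (2:ℤ)^t *
      (if t < r then (1:ℤ) else if t = r then -1 else 0)) d r hr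
  rw [hsplit]
  beta_reduce
  have h1 : ∑ t ∈ Finset.range r, (2:ℤ)^t *
      (if t < r then (1:ℤ) else if t = r then -1 else 0)
      = (∑ t ∈ Finset.range r, (2:ℤ)^t) * 1 := by
    rw [Finset.sum_mul]
    refine Finset.sum_congr rfl fun t ht => ?_
    rw [if_pos (Finset.mem_range.mp ht)]
  have h2 : (2:ℤ)^r * (if r < r then (1:ℤ) else if r = r then -1 else 0)
      = (2:ℤ)^r * (-1) := by
    rw [if_neg (lt_irrefl r), if_pos rfl]
  have h3 : ∑ t ∈ Finset.Ico (r+1) d, (2:ℤ)^t *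
      (if t < r then (1:ℤ) else if t = r then -1 else 0) = 0 := by
    refine Finset.sum_eq_zero fun t ht => ?_
    obtain ⟨ht1, ht2⟩ := Finset.mem_Ico.mp ht
    rw [if_neg (by omega), if_neg (by omega)]
    ring
  rw [h1, h2, h3]
  linear_combination geom_sum_mul (2:ℤ) r

/-- The construction for `m ≥ 2` (with `m = q + 1`). -/
lemma existsA {G : Type*} [AddCommGroup G] [Fintype G]
    (g : G) (hg : addOrderOf g = Fintype.card G)
    (d m q : ℕ) (hd : 0 < d) (hq : 0 < q) (hmq : m = q + 1) :
    ∃ s : Multiset (G × (Fin d → ℤ)),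
      IsMinZeroSumSeq {p : G × (Fin d → ℤ) | ∀ i, p.2 i ∈ Set.Icc (-(m:ℤ)) m} s ∧
      Multiset.card s = Fintype.card G * (2*q+1)^d := by
  classical
  set n := Fintype.card G with hn
  set A : ℕ := ∑ t ∈ Finset.range d, (2*q+1)^t with hA
  set a : ℕ := q * A with ha
  set b : ℕ := a + 1 with hb
  have hb0 : 0 < b := Nat.succ_pos a
  have hab : Nat.Coprime b a := by
    show Nat.gcd (a+1) a = 1
    rw [Nat.add_comm, Nat.gcd_add_self_left, Nat.gcd_one_left]
  set u : Fin d → ℤ := fun _ => (q : ℤ) with hu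
  set w : ℕ → Fin d → ℤ := fun j i =>
    if (i:ℕ) < j then (q:ℤ) else if (i:ℕ) = j then -((q:ℤ)+1) else -(q:ℤ) with hw
  set c : ℕ → ℕ := fun j => n * (q * (2*q+1)^(d-1-j)) with hc
  have hAz : ((A:ℕ):ℤ) = ∑ t ∈ Finset.range d, (2*(q:ℤ)+1)^t := by
    rw [hA]; push_cast; ring_nf
  obtain ⟨s, hs, hcard⟩ := core g hg (mb := m) a b hb0 hab u w c (2*(q:ℤ)+1)
    (fun i => by simp only [hu, Set.mem_Icc]; constructor <;> omega)
    (fun j hj i => by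
      simp only [hw, Set.mem_Icc]
      split_ifs <;> constructor <;> omega)
    (fun j hj h => by
      have h1 := congrFun h ⟨j, Finset.mem_range.mp hj⟩
      simp only [hu, hw] at h1
      split_ifs at h1 <;> omega)
    (fun j hj j' hj' h => by
      by_contra hne
      have h1 := congrFun h ⟨j, Finset.mem_range.mp hj⟩
      simp only [hw] at h1
      split_ifs at h1 <;> omega)
    (by
      simp only [hu]
      rw [Fin.sum_univ_eq_sum_range (fun t => (2*(q:ℤ)+1)^t * (q:ℤ)) d]
      rw [← Finset.sum_mul, ha]
      push_cast
      rw [hAz]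
      ring)
    (fun j hj => by
      simp only [hw]
      rw [Fin.sum_univ_eq_sum_range (fun t => (2*(q:ℤ)+1)^t *
        (if t < j then (q:ℤ) else if t = j then -((q:ℤ)+1) else -(q:ℤ))) d]
      rw [colsumA q d j (Finset.mem_range.mp hj), ← hAz]
      rw [hb, ha]
      push_cast
      ring)
    (by
      simp only [hc]
      rw [← Finset.mul_sum, ← Finset.mul_sum]
      congr 1
      rw [ha]
      congr 1
      exact Finset.sum_range_reflect (fun t => (2*q+1)^t) d)
    (fun i => by
      have hiN : (i:ℕ) < d := i.isLt
      rw [← Finset.sum_range_reflect (fun j => ((c j :ℕ):ℤ) * w j i) d]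
      have hcong : ∀ t ∈ Finset.range d, ((c (d-1-t) : ℕ):ℤ) * w (d-1-t) i
          = ((n*q : ℕ):ℤ) * ((2*(q:ℤ)+1)^t *
            (if t < d-1-(i:ℕ) then (q:ℤ) else if t = d-1-(i:ℕ) then -((q:ℤ)+1) else -(q:ℤ))) := by
        intro t ht
        have ht' := Finset.mem_range.mp ht
        have hcn : ((c (d-1-t) : ℕ):ℤ) = ((n*q:ℕ):ℤ) * (2*(q:ℤ)+1)^t := by
          simp only [hc]
          rw [show d-1-(d-1-t) = t by omega]
          push_cast
          ring
        have hwv : w (d-1-t) i = (if t < d-1-(i:ℕ) then (q:ℤ)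
            else if t = d-1-(i:ℕ) then -((q:ℤ)+1) else -(q:ℤ)) := by
          simp only [hw]
          by_cases h1 : t < d-1-(i:ℕ)
          · rw [if_pos (by omega), if_pos h1]
          · by_cases h2 : t = d-1-(i:ℕ)
            · rw [if_neg (by omega), if_pos (by omega), if_neg h1, if_pos h2]
            · rw [if_neg (by omega), if_neg (by omega), if_neg h1, if_neg h2]
        rw [hcn, hwv]
        ring
      rw [Finset.sum_congr rfl hcong, ← Finset.mul_sum,
        colsumA q d (d-1-(i:ℕ)) (by omega), ← hAz]
      simp only [hu]
      rw [hb, ha]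
      push_cast
      ring)
  refine ⟨s, hs, ?_⟩
  rw [hcard]
  congr 1
  have h2 : a + b = 2*q*A + 1 := by rw [hb, ha]; ring
  rw [h2, hA]
  exact geomA q d

/-- The construction for `m = 1`. -/
lemma existsB {G : Type*} [AddCommGroup G] [Fintype G]
    (g : G) (hg : addOrderOf g = Fintype.card G)
    (d : ℕ) (hd : 0 < d) :
    ∃ s : Multiset (G × (Fin d → ℤ)),
      IsMinZeroSumSeq {p : G × (Fin d → ℤ) | ∀ i, p.2 i ∈ Set.Icc (-((1:ℕ):ℤ)) ((1:ℕ):ℤ)} s ∧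
      Multiset.card s = Fintype.card G * 2^d := by
  classical
  set n := Fintype.card G with hn
  set A : ℕ := ∑ t ∈ Finset.range d, 2^t with hA
  set b : ℕ := 1 with hb
  have hb0 : 0 < b := Nat.one_pos
  have hab : Nat.Coprime b A := by
    show Nat.gcd 1 A = 1
    exact Nat.gcd_one_left A
  set u : Fin d → ℤ := fun _ => (1 : ℤ) with hu
  set w : ℕ → Fin d → ℤ := fun j i =>
    if (i:ℕ) < j then (1:ℤ) else if (i:ℕ) = j then -1 else 0 with hw
  set c : ℕ → ℕ := fun j => n * 2^(d-1-j) with hc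
  have hAz : ((A:ℕ):ℤ) = ∑ t ∈ Finset.range d, (2:ℤ)^t := by
    rw [hA]; push_cast; ring_nf
  obtain ⟨s, hs, hcard⟩ := core g hg (mb := 1) A b hb0 hab u w c (2:ℤ)
    (fun i => by simp only [hu, Set.mem_Icc]; constructor <;> omega)
    (fun j hj i => by
      simp only [hw, Set.mem_Icc]
      split_ifs <;> constructor <;> omega)
    (fun j hj h => by
      have h1 := congrFun h ⟨j, Finset.mem_range.mp hj⟩
      simp only [hu, hw] at h1
      split_ifs at h1 <;> omega)
    (fun j hj j' hj' h => by
      by_contra hne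
      have h1 := congrFun h ⟨j, Finset.mem_range.mp hj⟩
      simp only [hw] at h1
      split_ifs at h1 <;> omega)
    (by
      simp only [hu]
      rw [Fin.sum_univ_eq_sum_range (fun t => (2:ℤ)^t * (1:ℤ)) d]
      rw [← Finset.sum_mul, hAz]
      ring)
    (fun j hj => by
      simp only [hw]
      rw [Fin.sum_univ_eq_sum_range (fun t => (2:ℤ)^t *
        (if t < j then (1:ℤ) else if t = j then -1 else 0)) d]
      rw [colsumB d j (Finset.mem_range.mp hj), hb]
      norm_num)
    (by
      simp only [hc]
      rw [← Finset.mul_sum]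
      congr 1
      rw [hA]
      exact Finset.sum_range_reflect (fun t => 2^t) d)
    (fun i => by
      have hiN : (i:ℕ) < d := i.isLt
      rw [← Finset.sum_range_reflect (fun j => ((c j :ℕ):ℤ) * w j i) d]
      have hcong : ∀ t ∈ Finset.range d, ((c (d-1-t) : ℕ):ℤ) * w (d-1-t) i
          = ((n : ℕ):ℤ) * ((2:ℤ)^t *
            (if t < d-1-(i:ℕ) then (1:ℤ) else if t = d-1-(i:ℕ) then -1 else 0)) := by
        intro t ht
        have ht' := Finset.mem_range.mp ht
        have hcn : ((c (d-1-t) : ℕ):ℤ) = ((n:ℕ):ℤ) * (2:ℤ)^t := by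
          simp only [hc]
          rw [show d-1-(d-1-t) = t by omega]
          push_cast
          ring
        have hwv : w (d-1-t) i = (if t < d-1-(i:ℕ) then (1:ℤ)
            else if t = d-1-(i:ℕ) then -1 else 0) := by
          simp only [hw]
          by_cases h1 : t < d-1-(i:ℕ)
          · rw [if_pos (by omega), if_pos h1]
          · by_cases h2 : t = d-1-(i:ℕ)
            · rw [if_neg (by omega), if_pos (by omega), if_neg h1, if_pos h2]
            · rw [if_neg (by omega), if_neg (by omega), if_neg h1, if_neg h2]
        rw [hcn, hwv]
        ring
      rw [Finset.sum_congr rfl hcong, ← Finset.mul_sum,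
        colsumB d (d-1-(i:ℕ)) (by omega)]
      simp only [hu, hb]
      push_cast
      ring)
  refine ⟨s, hs, ?_⟩
  rw [hcard]
  congr 1
  rw [hb, hA]
  exact pow2A d

end DavenportAux

theorem davenport_cyclic_times_hypercube_ge (G : Type*) [AddCommGroup G] [Fintype G]
    (hG : IsAddCyclic G) (m d : ℕ) (hm : 0 < m) (hd : 0 < d) :
    davenport (Set.univ : Set G) *
        ((((2 * m - 1 + if m = 1 then 1 else 0) ^ d : ℕ)) : ℕ∞) ≤
      davenport {p : G × (Fin d → ℤ) | ∀ i, p.2 i ∈ Set.Icc (-(m : ℤ)) m} := by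
  classical
  obtain ⟨g, hgen⟩ := hG.exists_generator
  have hg : addOrderOf g = Fintype.card G := by
    have := addOrderOf_eq_card_of_forall_mem_zmultiples hgen
    simpa [Nat.card_eq_fintype_card] using this
  set n := Fintype.card G with hn
  set kk : ℕ := 2 * m - 1 + if m = 1 then 1 else 0 with hkk
  have hup : davenport (Set.univ : Set G) ≤ (n : ℕ∞) := by
    unfold davenport
    refine iSup_le fun s => iSup_le fun hs => ?_
    exact_mod_cast DavenportAux.card_le_of_min s hs
  have hex : ∃ s : Multiset (G × (Fin d → ℤ)),
      IsMinZeroSumSeq {p : G × (Fin d → ℤ) | ∀ i, p.2 i ∈ Set.Icc (-(m:ℤ)) m} s ∧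
      Multiset.card s = n * kk ^ d := by
    rcases eq_or_ne m 1 with h1 | h1
    · obtain ⟨s, hs, hc⟩ := DavenportAux.existsB g hg d hd
      subst h1
      refine ⟨s, hs, ?_⟩
      have hkk2 : kk = 2 := by rw [hkk]; norm_num
      rw [hc, hkk2, hn]
    · have hm2 : 2 ≤ m := by omega
      obtain ⟨s, hs, hc⟩ := DavenportAux.existsA g hg d m (m-1) hd (by omega) (by omega)
      refine ⟨s, hs, ?_⟩
      rw [hc]
      congr 1
      rw [hkk, if_neg h1]
      congr 1
      omega
  obtain ⟨s, hmin, hcard⟩ := hex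
  have hrhs : ((n * kk ^ d : ℕ) : ℕ∞) ≤
      davenport {p : G × (Fin d → ℤ) | ∀ i, p.2 i ∈ Set.Icc (-(m:ℤ)) m} := by
    unfold davenport
    rw [← hcard]
    exact le_iSup₂ (f := fun (s : Multiset (G × (Fin d → ℤ)))
      (_ : IsMinZeroSumSeq {p : G × (Fin d → ℤ) | ∀ i, p.2 i ∈ Set.Icc (-(m:ℤ)) m} s) =>
      (Multiset.card s : ℕ∞)) s hmin
  calc davenport (Set.univ : Set G) * ((kk ^ d : ℕ) : ℕ∞)
      ≤ (n : ℕ∞) * ((kk ^ d : ℕ) : ℕ∞) := by gcongr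
    _ = ((n * kk ^ d : ℕ) : ℕ∞) := by rw [Nat.cast_mul]
    _ ≤ _ := hrhs
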